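/- arXiv:0706.4193 — 5 statements merged into one kernel-verified Lean document; each statement's English description precedes it below -/
import Mathlib

section
/- Let c ≥ 0 and let ψ : ℝ → ℝ be twice differentiable on [0,∞) with ψ(0) = 0, ψ'(0) = 0, and ψ''(t) + ψ'(t) ≤ c for all t ≥ 0. Then ψ(t) ≤ c·(e^{−t} + t − 1) for all t ≥ 0. -/
open Real Set

/-- **A Gronwall-type comparison.** If `ψ` is twice differentiable on `[0,∞)` with
`ψ(0) = ψ'(0) = 0` and `ψ'' + ψ' ≤ c` on `[0,∞)` for some `c ≥ 0`, then
`ψ(t) ≤ c·(e^{−t} + t − 1)` for all `t ≥ 0`. -/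
theorem gronwall_comparison (c : ℝ) (hc : 0 ≤ c) (ψ ψ' ψ'' : ℝ → ℝ)
    (hψ : ∀ t ∈ Ici (0 : ℝ), HasDerivWithinAt ψ (ψ' t) (Ici 0) t)
    (hψ' : ∀ t ∈ Ici (0 : ℝ), HasDerivWithinAt ψ' (ψ'' t) (Ici 0) t)
    (h0 : ψ 0 = 0) (h0' : ψ' 0 = 0)
    (hineq : ∀ t ∈ Ici (0 : ℝ), ψ'' t + ψ' t ≤ c) :
    ∀ t ∈ Ici (0 : ℝ), ψ t ≤ c * (Real.exp (-t) + t - 1) := by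
  have hint : interior (Ici (0:ℝ)) = Ioi 0 := interior_Ici
  -- Step 1: F t = c*(exp t - 1) - exp t * ψ' t is monotone on Ici 0
  set F : ℝ → ℝ := fun t => c * (Real.exp t - 1) - Real.exp t * ψ' t with hF
  have hFd : ∀ t ∈ Ici (0:ℝ), HasDerivWithinAt F
      (c * Real.exp t - Real.exp t * (ψ'' t + ψ' t)) (Ici 0) t := by
    intro t ht
    have h1 : HasDerivWithinAt (fun t => c * (Real.exp t - 1)) (c * Real.exp t) (Ici 0) t :=
      (((Real.hasDerivAt_exp t).sub_const 1).hasDerivWithinAt).const_mul c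
    have h2 : HasDerivWithinAt (fun t => Real.exp t * ψ' t)
        (Real.exp t * ψ' t + Real.exp t * ψ'' t) (Ici 0) t :=
      ((Real.hasDerivAt_exp t).hasDerivWithinAt).mul (hψ' t ht)
    have := h1.sub h2
    refine this.congr_deriv ?_
    ring
  have hFmono : MonotoneOn F (Ici 0) := by
    apply monotoneOn_of_hasDerivWithinAt_nonneg (convex_Ici 0)
    · exact fun t ht => (hFd t ht).continuousWithinAt
    · intro t ht
      rw [hint] at *
      exact (hFd t (le_of_lt ht : (0:ℝ) ≤ t)).mono Ioi_subset_Ici_self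
    · intro t ht
      rw [hint] at ht
      have := hineq t (le_of_lt ht : (0:ℝ) ≤ t)
      have he : (0:ℝ) < Real.exp t := Real.exp_pos t
      nlinarith [Real.exp_pos t]
  have hψ'le : ∀ t ∈ Ici (0:ℝ), ψ' t ≤ c * (1 - Real.exp (-t)) := by
    intro t ht
    have := hFmono (self_mem_Ici) ht ht
    simp only [hF, Real.exp_zero, h0'] at this
    have he : (0:ℝ) < Real.exp t := Real.exp_pos t
    rw [Real.exp_neg]
    have hmi : Real.exp t * (Real.exp t)⁻¹ = 1 := mul_inv_cancel₀ he.ne'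
    have hinv : 0 < (Real.exp t)⁻¹ := inv_pos.2 he
    nlinarith [this]
  -- Step 2: G t = c*(exp(-t)+t-1) - ψ t is monotone on Ici 0
  set G : ℝ → ℝ := fun t => c * (Real.exp (-t) + t - 1) - ψ t with hG
  have hGd : ∀ t ∈ Ici (0:ℝ), HasDerivWithinAt G
      (c * (1 - Real.exp (-t)) - ψ' t) (Ici 0) t := by
    intro t ht
    have h1 : HasDerivAt (fun t : ℝ => Real.exp (-t) + t - 1) (1 - Real.exp (-t)) t := by
      have he : HasDerivAt (fun t : ℝ => Real.exp (-t)) (-Real.exp (-t)) t := by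
        simpa [Function.comp_def] using (Real.hasDerivAt_exp (-t)).comp t ((hasDerivAt_id t).neg)
      simpa [sub_eq_add_neg, add_comm] using ((he.add (hasDerivAt_id t)).sub_const 1)
    exact ((h1.const_mul c).hasDerivWithinAt).sub (hψ t ht)
  have hGmono : MonotoneOn G (Ici 0) := by
    apply monotoneOn_of_hasDerivWithinAt_nonneg (convex_Ici 0)
    · exact fun t ht => (hGd t ht).continuousWithinAt
    · intro t ht
      rw [hint] at *
      exact (hGd t (le_of_lt ht : (0:ℝ) ≤ t)).mono Ioi_subset_Ici_self
    · intro t ht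
      rw [hint] at ht
      have := hψ'le t (le_of_lt ht : (0:ℝ) ≤ t)
      linarith
  intro t ht
  have := hGmono (self_mem_Ici) ht ht
  simp only [hG, h0] at this
  simp only [neg_zero, Real.exp_zero] at this
  norm_num at this
  linarith
end

section
/- Let 0 < p < 1 and λ ∈ ℝ. Set Δ = 1 + 4λ(λ + 2p − 1), s₁ = (−1 + √Δ)/2, s₂ = (−1 − √Δ)/2, and let M be the real 2×2 matrix with rows (−1+p+λ, 1−p) and (p, −p−λ). Then: (i) Δ > 0, so s₁ > s₂ are two distinct real numbers, and both are eigenvalues of M; (ii) p + λ + s₂ < 0; (iii) with the row vector m = (p, 1−p), the ratio (m · exp(tM))₁ / (m · exp(tM))₂ of the two entries of m · exp(tM) converges, as t → ∞, to −p/(p + λ + s₂); (iv) this limit −p/(p + λ + s₂) equals 1 if and only if λ = 1 − 2p. -/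
open Matrix Filter

set_option maxHeartbeats 1000000

lemma two_by_two_mul_diag_mul (a b c d e f g h E1 E2 : ℝ) :
    !![a, b; c, d] * Matrix.diagonal ![E1, E2] * !![e, f; g, h]
      = !![a*E1*e + b*E2*g, a*E1*f + b*E2*h; c*E1*e + d*E2*g, c*E1*f + d*E2*h] := by
  have hD : Matrix.diagonal ![E1, E2] = !![E1, 0; 0, E2] := by
    ext i j; fin_cases i <;> fin_cases j <;> simp [Matrix.diagonal_apply]
  rw [hD, Matrix.mul_fin_two, Matrix.mul_fin_two]
  ext i j
  fin_cases i <;> fin_cases j <;> simp <;> ring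

lemma vecMul_two (x y a b c d : ℝ) :
    Matrix.vecMul ![x, y] !![a, b; c, d] = ![x*a + y*c, x*b + y*d] := by
  funext j
  fin_cases j <;> simp [Matrix.vecMul, dotProduct, Fin.sum_univ_two]

/-- **Spectral analysis of the 2×2 Feynman–Kac matrix.** Let `0 < p < 1`, `λ ∈ ℝ`,
`Δ = 1 + 4λ(λ + 2p − 1)`, `s₁ = (−1 + √Δ)/2`, `s₂ = (−1 − √Δ)/2`, and
`M = !![−1+p+λ, 1−p; p, −p−λ]`. Then `Δ > 0` (so `s₁ > s₂` are two distinct real numbers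
and both are eigenvalues of `M`), `p + λ + s₂ < 0`, the ratio of the two entries of the
row vector `(p, 1−p)·exp(tM)` converges as `t → ∞` to `−p/(p + λ + s₂)`, and this limit
equals `1` if and only if `λ = 1 − 2p`. -/
theorem feynman_kac_two_by_two (p l : ℝ) (hp : 0 < p) (hp1 : p < 1)
    (Δ s₁ s₂ : ℝ) (hΔ : Δ = 1 + 4 * l * (l + 2 * p - 1))
    (hs₁ : s₁ = (-1 + Real.sqrt Δ) / 2) (hs₂ : s₂ = (-1 - Real.sqrt Δ) / 2)
    (M : Matrix (Fin 2) (Fin 2) ℝ)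
    (hM : M = !![-1 + p + l, 1 - p; p, -p - l]) :
    0 < Δ ∧ s₂ < s₁ ∧
    (M - s₁ • (1 : Matrix (Fin 2) (Fin 2) ℝ)).det = 0 ∧
    (M - s₂ • (1 : Matrix (Fin 2) (Fin 2) ℝ)).det = 0 ∧
    p + l + s₂ < 0 ∧
    Tendsto (fun t : ℝ =>
        (Matrix.vecMul ![p, 1 - p] (NormedSpace.exp (t • M)) 0) /
        (Matrix.vecMul ![p, 1 - p] (NormedSpace.exp (t • M)) 1))
      atTop (nhds (-p / (p + l + s₂))) ∧
    (-p / (p + l + s₂) = 1 ↔ l = 1 - 2 * p) := by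
  have hΔpos : 0 < Δ := by nlinarith [sq_nonneg (2*l + 2*p - 1)]
  set q := Real.sqrt Δ with hqdef
  have hq2 : q^2 = Δ := Real.sq_sqrt hΔpos.le
  have hqpos : 0 < q := Real.sqrt_pos.mpr hΔpos
  have hlt : s₂ < s₁ := by rw [hs₁, hs₂]; linarith
  have hkey : 2*p + 2*l - 1 < q := by
    nlinarith [mul_pos hp (by linarith : (0:ℝ) < 1 - p)]
  have hkey2 : 2*l - 1 < q := by
    nlinarith [mul_pos hp (by linarith : (0:ℝ) < 1 - p)]
  have hden : p + l + s₂ < 0 := by rw [hs₂]; linarith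
  have hq1' : s₁^2 + s₁ = l*(l+2*p-1) := by
    rw [hs₁]; rw [hΔ] at hq2; linear_combination hq2/4
  have hq2' : s₂^2 + s₂ = l*(l+2*p-1) := by
    rw [hs₂]; rw [hΔ] at hq2; linear_combination hq2/4
  have hdet1 : (M - s₁ • (1 : Matrix (Fin 2) (Fin 2) ℝ)).det = 0 := by
    subst hM
    simp [Matrix.det_fin_two, Matrix.sub_apply, Matrix.smul_apply, Matrix.one_apply]
    linear_combination hq1'
  have hdet2 : (M - s₂ • (1 : Matrix (Fin 2) (Fin 2) ℝ)).det = 0 := by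
    subst hM
    simp [Matrix.det_fin_two, Matrix.sub_apply, Matrix.smul_apply, Matrix.one_apply]
    linear_combination hq2'
  -- diagonalization
  set u₁ := s₁ + 1 - p - l with hu₁
  set u₂ := s₂ + 1 - p - l with hu₂
  set d := (1-p)*(s₂-s₁) with hd
  have hbne : (1:ℝ) - p ≠ 0 := by intro h; linarith
  have hsne : s₂ - s₁ ≠ 0 := by intro h; nlinarith
  have hdne : d ≠ 0 := mul_ne_zero hbne hsne
  set S : Matrix (Fin 2) (Fin 2) ℝ := !![1-p, 1-p; u₁, u₂] with hS
  set T : Matrix (Fin 2) (Fin 2) ℝ := !![u₂/d, -(1-p)/d; -u₁/d, (1-p)/d] with hT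
  have hST : S * T = 1 := by
    ext i j
    fin_cases i <;> fin_cases j <;>
      simp [hS, hT, Matrix.mul_apply, Fin.sum_univ_two, Matrix.one_apply] <;>
      · field_simp [hd, hu₁, hu₂]; ring
  have hMS : M * S = S * Matrix.diagonal ![s₁, s₂] := by
    ext i j
    fin_cases i <;> fin_cases j
    · simp [hS, hM, Matrix.mul_apply, Fin.sum_univ_two, Matrix.diagonal, hu₁, hu₂]; try ring
    · simp [hS, hM, Matrix.mul_apply, Fin.sum_univ_two, Matrix.diagonal, hu₁, hu₂]; try ring
    · simp [hS, hM, Matrix.mul_apply, Fin.sum_univ_two, Matrix.diagonal, hu₁, hu₂]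
      linear_combination -hq1'
    · simp [hS, hM, Matrix.mul_apply, Fin.sum_univ_two, Matrix.diagonal, hu₁, hu₂]
      linear_combination -hq2'
  have hMconj : M = S * Matrix.diagonal ![s₁, s₂] * T := by
    calc M = M * (S * T) := by rw [hST, mul_one]
    _ = (M * S) * T := by rw [mul_assoc]
    _ = S * Matrix.diagonal ![s₁, s₂] * T := by rw [hMS]
  have hSinv : S⁻¹ = T := inv_eq_right_inv hST
  have hSu : IsUnit S := ⟨⟨S, T, hST, mul_eq_one_comm.mp hST⟩, rfl⟩
  have hexp : ∀ t : ℝ, NormedSpace.exp (t • M)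
      = S * Matrix.diagonal ![Real.exp (t*s₁), Real.exp (t*s₂)] * T := by
    intro t
    have hD : Matrix.diagonal ![t*s₁, t*s₂] = t • Matrix.diagonal ![s₁, s₂] := by
      rw [← Matrix.diagonal_smul]
      congr 1; funext i; fin_cases i <;> simp
    have h1 : t • M = S * Matrix.diagonal ![t*s₁, t*s₂] * T := by
      rw [hMconj, hD, Matrix.mul_smul, Matrix.smul_mul]
    rw [h1, ← hSinv, Matrix.exp_conj S _ hSu, hSinv, Matrix.exp_diagonal]
    rw [Pi.exp_def]
    have he : (fun i => NormedSpace.exp (![t * s₁, t * s₂] i))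
        = ![Real.exp (t * s₁), Real.exp (t * s₂)] := by
      funext i; fin_cases i <;> simp [← Real.exp_eq_exp_ℝ]
    rw [he]
  -- entries of the row vector
  set c₁ := s₁ + 1 - l with hc₁
  set c₂ := s₂ + 1 - l with hc₂
  have hc₁pos : 0 < c₁ := by rw [hc₁, hs₁]; linarith
  have hent0 : ∀ t : ℝ, Matrix.vecMul ![p, 1 - p] (NormedSpace.exp (t • M)) 0
      = (s₂ - s₁)⁻¹ * (Real.exp (t*s₁) * (u₂*c₁ - u₁*c₂*Real.exp (t*(s₂-s₁)))) := by
    intro t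
    have hE : Real.exp (t*s₂) = Real.exp (t*s₁) * Real.exp (t*(s₂-s₁)) := by
      rw [← Real.exp_add]; ring_nf
    rw [hexp t, hS, hT, two_by_two_mul_diag_mul, vecMul_two]
    show p * _ + (1-p) * _ = _
    rw [hE]
    simp only [hu₁, hu₂, hc₁, hc₂, hd]
    field_simp
    ring
  have hent1 : ∀ t : ℝ, Matrix.vecMul ![p, 1 - p] (NormedSpace.exp (t • M)) 1
      = (s₂ - s₁)⁻¹ * (Real.exp (t*s₁) * ((1-p)*(c₂*Real.exp (t*(s₂-s₁)) - c₁))) := by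
    intro t
    have hE : Real.exp (t*s₂) = Real.exp (t*s₁) * Real.exp (t*(s₂-s₁)) := by
      rw [← Real.exp_add]; ring_nf
    rw [hexp t, hS, hT, two_by_two_mul_diag_mul, vecMul_two]
    show p * _ + (1-p) * _ = _
    rw [hE]
    simp only [hu₁, hu₂, hc₁, hc₂, hd]
    field_simp
    ring
  have hratio : ∀ t : ℝ,
      (Matrix.vecMul ![p, 1 - p] (NormedSpace.exp (t • M)) 0) /
      (Matrix.vecMul ![p, 1 - p] (NormedSpace.exp (t • M)) 1)
      = (u₂*c₁ - u₁*c₂*Real.exp (t*(s₂-s₁))) / ((1-p)*(c₂*Real.exp (t*(s₂-s₁)) - c₁)) := by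
    intro t
    rw [hent0 t, hent1 t, mul_div_mul_left _ _ (inv_ne_zero hsne),
      mul_div_mul_left _ _ (Real.exp_pos (t*s₁)).ne']
  have hr0 : Tendsto (fun t : ℝ => Real.exp (t*(s₂-s₁))) atTop (nhds 0) := by
    apply Real.tendsto_exp_atBot.comp
    exact Tendsto.atTop_mul_const_of_neg (by linarith : s₂ - s₁ < 0) tendsto_id
  have hnum : Tendsto (fun t : ℝ => u₂*c₁ - u₁*c₂*Real.exp (t*(s₂-s₁))) atTop
      (nhds (u₂*c₁ - u₁*c₂*0)) := tendsto_const_nhds.sub (hr0.const_mul _)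
  have hdenT : Tendsto (fun t : ℝ => (1-p)*(c₂*Real.exp (t*(s₂-s₁)) - c₁)) atTop
      (nhds ((1-p)*(c₂*0 - c₁))) :=
    (((hr0.const_mul _).sub tendsto_const_nhds).const_mul _)
  have hdenne : ((1:ℝ)-p)*(c₂*0 - c₁) ≠ 0 := by
    apply mul_ne_zero hbne
    intro h; nlinarith
  have hplsne : p + l + s₂ ≠ 0 := hden.ne
  have hval : (u₂*c₁ - u₁*c₂*0) / ((1-p)*(c₂*0 - c₁)) = -p/(p+l+s₂) := by
    have hc₁ne : c₁ ≠ 0 := hc₁pos.ne'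
    have e1 : u₂*c₁ - u₁*c₂*0 = u₂ * c₁ := by ring
    have e2 : (1-p)*(c₂*0 - c₁) = -(1-p) * c₁ := by ring
    rw [e1, e2, mul_div_mul_right _ _ hc₁ne,
      div_eq_div_iff (neg_ne_zero.mpr hbne) hplsne, hu₂]
    linear_combination hq2'
  have htend : Tendsto (fun t : ℝ =>
      (Matrix.vecMul ![p, 1 - p] (NormedSpace.exp (t • M)) 0) /
      (Matrix.vecMul ![p, 1 - p] (NormedSpace.exp (t • M)) 1))
      atTop (nhds (-p / (p + l + s₂))) := by
    have h := hnum.div hdenT hdenne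
    rw [hval] at h
    exact Tendsto.congr (fun t => (hratio t).symm) h
  refine ⟨hΔpos, hlt, hdet1, hdet2, hden, htend, ?_, ?_⟩
  · intro h
    have heq : -p = p + l + s₂ := by
      rw [div_eq_one_iff_eq hplsne] at h; exact h
    have hqv : q = 4*p + 2*l - 1 := by rw [hs₂] at heq; linarith
    have h2 : p * (2*p + l - 1) = 0 := by
      rw [hΔ] at hq2
      linear_combination hq2/8 - (q + 4*p + 2*l - 1)/8 * hqv
    rcases mul_eq_zero.mp h2 with h3 | h3
    · exact absurd h3 hp.ne'
    · linarith
  · intro h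
    have hΔ1 : Δ = 1 := by rw [hΔ, h]; ring
    have hq1 : q = 1 := by rw [hqdef, hΔ1, Real.sqrt_one]
    have : p + l + s₂ = -p := by rw [h, hs₂, hq1]; ring
    rw [this, neg_div_neg_eq, div_self hp.ne']
end

section
/- For every p ∈ (0,1) and every s ∈ [0,1] one has (s − p)² ≤ p(1−p)·(√(s/p) − √((1−s)/(1−p)))², and equality holds when s = 1 − p; in particular the constant p(1−p) cannot be replaced by any smaller constant. -/
set_option maxHeartbeats 1000000

open Real Set

/-- **Sharp `W₁I` inequality for the Bernoulli measure.** For `p ∈ (0,1)` and `s ∈ [0,1]`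
one has `(s − p)² ≤ p(1−p)·(√(s/p) − √((1−s)/(1−p)))²`; equality holds when `s = 1 − p`;
and the constant `p(1−p)` cannot be replaced by any smaller constant. -/
theorem bernoulli_W1I_sharp (p : ℝ) (hp : 0 < p) (hp1 : p < 1) :
    (∀ s ∈ Icc (0 : ℝ) 1,
      (s - p) ^ 2 ≤ p * (1 - p) * (Real.sqrt (s / p) - Real.sqrt ((1 - s) / (1 - p))) ^ 2) ∧
    ((1 - p) - p) ^ 2 =
      p * (1 - p) * (Real.sqrt ((1 - p) / p) - Real.sqrt ((1 - (1 - p)) / (1 - p))) ^ 2 ∧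
    (∀ c : ℝ, c < p * (1 - p) → ∃ s ∈ Icc (0 : ℝ) 1,
      c * (Real.sqrt (s / p) - Real.sqrt ((1 - s) / (1 - p))) ^ 2 < (s - p) ^ 2) := by
  have hq : (0:ℝ) < 1 - p := by linarith
  -- part 2 first, as a `have`, so we can reuse it
  have heq : ((1 - p) - p) ^ 2 =
      p * (1 - p) * (Real.sqrt ((1 - p) / p) - Real.sqrt ((1 - (1 - p)) / (1 - p))) ^ 2 := by
    have h1 : (1 - (1 - p)) = p := by ring
    rw [h1]
    set a := Real.sqrt ((1 - p) / p) with ha_def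
    set b := Real.sqrt (p / (1 - p)) with hb_def
    have ha : a ^ 2 = (1 - p) / p := Real.sq_sqrt (by positivity)
    have hb : b ^ 2 = p / (1 - p) := Real.sq_sqrt (by positivity)
    have ha' : p * a ^ 2 = 1 - p := by rw [ha]; field_simp
    have hb' : (1 - p) * b ^ 2 = p := by rw [hb]; field_simp
    have hab : a * b = 1 := by
      rw [ha_def, hb_def, ← Real.sqrt_mul (by positivity)]
      rw [show (1 - p) / p * (p / (1 - p)) = 1 by field_simp]
      exact Real.sqrt_one
    nlinarith [ha', hb', hab]
  refine ⟨?_, heq, ?_⟩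
  · intro s hs
    obtain ⟨hs0, hs1⟩ := hs
    set a := Real.sqrt (s / p) with ha_def
    set b := Real.sqrt ((1 - s) / (1 - p)) with hb_def
    have ha : a ^ 2 = s / p := Real.sq_sqrt (by positivity)
    have hb : b ^ 2 = (1 - s) / (1 - p) :=
      Real.sq_sqrt (div_nonneg (by linarith) hq.le)
    have ha' : p * a ^ 2 = s := by rw [ha]; field_simp
    have hb' : (1 - p) * b ^ 2 = 1 - s := by rw [hb]; field_simp
    nlinarith [sq_nonneg (a * b - 1), mul_pos hp hq, ha', hb']
  · intro c hc
    rcases le_or_gt c 0 with hc0 | hc0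
    · -- take s = 1
      refine ⟨1, ⟨by norm_num, le_refl 1⟩, ?_⟩
      have h2 : c * (Real.sqrt (1 / p) - Real.sqrt ((1 - 1) / (1 - p))) ^ 2 ≤ 0 :=
        mul_nonpos_of_nonpos_of_nonneg hc0 (sq_nonneg _)
      nlinarith [h2]
    · rcases eq_or_ne p (1/2) with hhalf | hhalf
      · -- p = 1/2 : take s = 1/2 + √(2c(1-4c))
        subst hhalf
        have hc4 : c < 1/4 := by linarith [hc]
        set e := Real.sqrt (2 * c * (1 - 4 * c)) with he_def
        have he0 : 0 ≤ e := Real.sqrt_nonneg _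
        have he2 : e ^ 2 = 2 * c * (1 - 4 * c) := by
          rw [he_def]; exact Real.sq_sqrt (by nlinarith)
        have hehalf : e < 1/2 := by nlinarith [he2, he0]
        refine ⟨1/2 + e, ⟨by linarith, by linarith⟩, ?_⟩
        set u := Real.sqrt ((1/2 + e) / (1/2 : ℝ)) with hu_def
        set v := Real.sqrt ((1 - (1/2 + e)) / (1 - (1/2 : ℝ))) with hv_def
        have hu : u ^ 2 = 1 + 2 * e := by
          rw [hu_def, Real.sq_sqrt (by positivity)]; ring
        have hv : v ^ 2 = 1 - 2 * e := by
          rw [hv_def, Real.sq_sqrt (by norm_num; linarith)]; ring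
        have hu0 : 0 ≤ u := Real.sqrt_nonneg _
        have hv0 : 0 ≤ v := Real.sqrt_nonneg _
        have hm : (u * v) ^ 2 = 1 - 4 * e ^ 2 := by
          have : (u * v) ^ 2 = u ^ 2 * v ^ 2 := by ring
          rw [this, hu, hv]; ring
        have huv0 : 0 ≤ u * v := mul_nonneg hu0 hv0
        clear_value u v e
        clear hu_def hv_def he_def
        have h1 : (u * v - 4 * c) * (u * v + 4 * c) = (1 - 4 * c) ^ 2 := by
          linear_combination hm - 4 * he2
        have h2 : 0 < (1 - 4 * c) ^ 2 := by
          have h3 : 0 < 1 - 4 * c := by linarith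
          positivity
        have hkey : 0 < u * v - 4 * c := by
          by_contra h
          push_neg at h
          have h4 : 0 ≤ u * v + 4 * c := by linarith
          have h5 : (u * v - 4 * c) * (u * v + 4 * c) ≤ 0 :=
            mul_nonpos_of_nonpos_of_nonneg h h4
          linarith
        nlinarith [hu, hv, he2, mul_pos hc0 hkey]
      · -- p ≠ 1/2 : take s = 1 - p
        refine ⟨1 - p, ⟨by linarith, by linarith⟩, ?_⟩
        have hne : (1 - 2 * p) ^ 2 > 0 := by
          have : 1 - 2 * p ≠ 0 := fun h => hhalf (by linarith)
          positivity
        have hX : 0 < (Real.sqrt ((1 - p) / p) - Real.sqrt ((1 - (1 - p)) / (1 - p))) ^ 2 := by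
          rcases (sq_nonneg (Real.sqrt ((1 - p) / p) -
              Real.sqrt ((1 - (1 - p)) / (1 - p)))).lt_or_eq with h | h
          · exact h
          · exfalso
            rw [← h, mul_zero] at heq
            nlinarith [heq, hne]
        rw [heq]
        exact mul_lt_mul_of_pos_right hc hX
end

section
/- Let μ be a probability measure on ℝⁿ satisfying the Poincaré inequality Var_μ(g) ≤ c_P · ∫ |∇g|² dμ for every continuously differentiable g ∈ L²(μ), where c_P is a finite constant. Then for every measurable f : ℝⁿ → [0,∞) with ∫ f dμ = 1 such that √f is continuously differentiable, one has (∫ |f − 1| dμ)² ≤ 4 c_P · ∫ |∇√f|² dμ. Equivalently, writing ν = f·μ, ‖ν − μ‖_TV² ≤ 4 c_P · I(ν|μ). -/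
open MeasureTheory Real

lemma integral_mul_sq_le_cs {α : Type*} [MeasurableSpace α] (μ : Measure α)
    {u v : α → ℝ} (hu : MemLp u 2 μ) (hv : MemLp v 2 μ) :
    (∫ x, u x * v x ∂μ) ^ 2 ≤ (∫ x, u x ^ 2 ∂μ) * (∫ x, v x ^ 2 ∂μ) := by
  set U := hu.toLp u
  set V := hv.toLp v
  have hUV : ∫ x, u x * v x ∂μ = inner ℝ U V := by
    rw [MeasureTheory.L2.inner_def]
    refine integral_congr_ae ?_
    filter_upwards [hu.coeFn_toLp, hv.coeFn_toLp] with x h1 h2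
    simp [U, V, h1, h2, real_inner_eq_re_inner, mul_comm]
  have hUU : ∫ x, u x ^ 2 ∂μ = inner ℝ U U := by
    rw [MeasureTheory.L2.inner_def]
    refine integral_congr_ae ?_
    filter_upwards [hu.coeFn_toLp] with x h1
    simp [U, h1, sq]
  have hVV : ∫ x, v x ^ 2 ∂μ = inner ℝ V V := by
    rw [MeasureTheory.L2.inner_def]
    refine integral_congr_ae ?_
    filter_upwards [hv.coeFn_toLp] with x h1
    simp [V, h1, sq]
  rw [hUV, hUU, hVV, sq]
  exact real_inner_mul_inner_self_le U V

/-- **Poincaré implies the CKP-type transportation-information inequality.** If a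
probability measure `μ` on `ℝⁿ` satisfies the Poincaré inequality
`Var_μ(g) ≤ c_P ∫ |∇g|² dμ` for all continuously differentiable `g ∈ L²(μ)`, then for
every density `f ≥ 0` with `∫ f dμ = 1` and `√f` continuously differentiable one has
`‖fμ − μ‖_TV² = (∫ |f − 1| dμ)² ≤ 4 c_P ∫ |∇√f|² dμ = 4 c_P I(fμ|μ)`. -/
theorem poincare_implies_tv_information {n : ℕ}
    (μ : Measure (EuclideanSpace ℝ (Fin n))) [IsProbabilityMeasure μ] (cP : ℝ)
    (hPoincare : ∀ g : EuclideanSpace ℝ (Fin n) → ℝ, ContDiff ℝ 1 g → MemLp g 2 μ →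
      ∫ x, (g x) ^ 2 ∂μ - (∫ x, g x ∂μ) ^ 2 ≤ cP * ∫ x, ‖fderiv ℝ g x‖ ^ 2 ∂μ)
    (f : EuclideanSpace ℝ (Fin n) → ℝ) (hf_meas : Measurable f)
    (hf_nonneg : ∀ x, 0 ≤ f x) (hf_int : ∫ x, f x ∂μ = 1)
    (hf_sqrt : ContDiff ℝ 1 (fun x => Real.sqrt (f x))) :
    (∫ x, |f x - 1| ∂μ) ^ 2 ≤
      4 * cP * ∫ x, ‖fderiv ℝ (fun y => Real.sqrt (f y)) x‖ ^ 2 ∂μ := by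
  set g : EuclideanSpace ℝ (Fin n) → ℝ := fun x => Real.sqrt (f x) with hg_def
  have hg_nonneg : ∀ x, 0 ≤ g x := fun x => Real.sqrt_nonneg _
  have hgsq : ∀ x, g x ^ 2 = f x := fun x => Real.sq_sqrt (hf_nonneg x)
  have hf_integrable : Integrable f μ := by
    by_contra h
    rw [integral_undef h] at hf_int
    norm_num at hf_int
  have hg_cont : Continuous g := hf_sqrt.continuous
  have hg2_int : Integrable (fun x => g x ^ 2) μ := by
    have : (fun x => g x ^ 2) = f := funext hgsq
    rw [this]; exact hf_integrable
  have hg_mem : MemLp g 2 μ := by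
    rw [memLp_two_iff_integrable_sq hg_cont.aestronglyMeasurable]
    exact hg2_int
  have hg_int : Integrable g μ := hg_mem.integrable one_le_two
  have hg2_val : ∫ x, g x ^ 2 ∂μ = 1 := by simp_rw [hgsq]; exact hf_int
  have hgm1 : MemLp (fun x => g x - 1) 2 μ := hg_mem.sub (memLp_const 1)
  have hgp1 : MemLp (fun x => g x + 1) 2 μ := hg_mem.add (memLp_const 1)
  have hu : MemLp (fun x => |g x - 1|) 2 μ := by
    have := hgm1.norm
    simpa [Real.norm_eq_abs] using this
  have hA : ∫ x, (g x - 1) ^ 2 ∂μ = 2 - 2 * ∫ x, g x ∂μ := by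
    have h1 : ∀ x, (g x - 1) ^ 2 = g x ^ 2 - 2 * g x + 1 := fun x => by ring
    simp_rw [h1]
    have hint : Integrable (fun x => g x ^ 2 - 2 * g x) μ := hg2_int.sub (hg_int.const_mul 2)
    rw [integral_add hint (integrable_const 1),
      integral_sub hg2_int (hg_int.const_mul 2), integral_const_mul, hg2_val]
    simp
    ring
  have hB : ∫ x, (g x + 1) ^ 2 ∂μ = 2 + 2 * ∫ x, g x ∂μ := by
    have h1 : ∀ x, (g x + 1) ^ 2 = g x ^ 2 + 2 * g x + 1 := fun x => by ring
    simp_rw [h1]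
    have hint : Integrable (fun x => g x ^ 2 + 2 * g x) μ := hg2_int.add (hg_int.const_mul 2)
    rw [integral_add hint (integrable_const 1),
      integral_add hg2_int (hg_int.const_mul 2), integral_const_mul, hg2_val]
    simp
    ring
  have hTV : ∀ x, |f x - 1| = |g x - 1| * (g x + 1) := by
    intro x
    have h1 : f x - 1 = (g x - 1) * (g x + 1) := by rw [← hgsq x]; ring
    rw [h1, abs_mul, abs_of_nonneg (show (0:ℝ) ≤ g x + 1 by linarith [hg_nonneg x])]
  have key := integral_mul_sq_le_cs μ hu hgp1
  simp_rw [sq_abs] at key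
  have hP := hPoincare g hf_sqrt hg_mem
  calc (∫ x, |f x - 1| ∂μ) ^ 2
      = (∫ x, |g x - 1| * (g x + 1) ∂μ) ^ 2 := by simp_rw [hTV]
    _ ≤ (∫ x, (g x - 1) ^ 2 ∂μ) * (∫ x, (g x + 1) ^ 2 ∂μ) := key
    _ = 4 * ((∫ x, g x ^ 2 ∂μ) - (∫ x, g x ∂μ) ^ 2) := by
        rw [hA, hB, hg2_val]; ring
    _ ≤ 4 * (cP * ∫ x, ‖fderiv ℝ g x‖ ^ 2 ∂μ) := by linarith
    _ = 4 * cP * ∫ x, ‖fderiv ℝ (fun y => Real.sqrt (f y)) x‖ ^ 2 ∂μ := by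
        rw [hg_def]; ring
end

section
/- Let −∞ ≤ x₀ < y₀ ≤ +∞, let m : (x₀, y₀) → (0,∞) be Lebesgue-integrable with 0 < Z = ∫_{x₀}^{y₀} m(x) dx < ∞, and let μ be the probability measure on (x₀, y₀) with density m/Z with respect to Lebesgue measure. Let ρ : (x₀, y₀) → ℝ be differentiable with ρ'(x) > 0 for all x and ρ ∈ L¹(μ). Then for every locally absolutely continuous g : (x₀, y₀) → ℝ with |g'(x)| ≤ ρ'(x) for almost every x and ∫ g dμ = 0, and for every x ∈ (x₀, y₀): ∫_x^{y₀} g(z) m(z) dz ≤ ∫_x^{y₀} (ρ(z) − μ(ρ)) m(z) dz, where μ(ρ) = ∫ ρ dμ. Consequently, sup_x (1/ρ'(x)) ∫_x^{y₀} g(z) m(z) dz ≤ ‖g‖_{Lip(ρ)} · C(ρ), where ‖g‖_{Lip(ρ)} = sup_x |g'(x)|/ρ'(x) and C(ρ) = sup_x (1/ρ'(x)) ∫_x^{y₀} (ρ(z) − μ(ρ)) m(z) dz. -/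
open MeasureTheory Real Set

/-- **Tail estimate for the one-dimensional Poisson equation.** Let `(x₀, y₀)` be an
interval with `−∞ ≤ x₀ < y₀ ≤ +∞`, `m > 0` an integrable speed density on it with total
mass `Z ∈ (0, ∞)`, and `μ` the probability measure with density `m/Z`. Let `ρ` be
differentiable with `ρ' > 0` and `ρ ∈ L¹(μ)`. Then for every locally absolutely
continuous `g` with `|g'| ≤ ρ'` a.e. and `∫ g dμ = 0`, and every `x ∈ (x₀, y₀)`,
`∫_x^{y₀} g m ≤ ∫_x^{y₀} (ρ − μ(ρ)) m`; consequently
`sup_x (1/ρ'(x)) ∫_x^{y₀} g m ≤ ‖g‖_{Lip(ρ)}·C(ρ)` where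
`‖g‖_{Lip(ρ)} = sup_x |g'(x)|/ρ'(x)` and
`C(ρ) = sup_x (1/ρ'(x)) ∫_x^{y₀} (ρ − μ(ρ)) m`. -/
theorem one_dim_poisson_tail_estimate (x₀ y₀ : EReal) (hxy : x₀ < y₀)
    (S : Set ℝ) (hS : S = {x : ℝ | x₀ < (x : EReal) ∧ (x : EReal) < y₀})
    (m : ℝ → ℝ) (hm_pos : ∀ x ∈ S, 0 < m x)
    (hm_int : IntegrableOn m S volume)
    (Z : ℝ) (hZ_def : Z = ∫ x in S, m x ∂volume) (hZ_pos : 0 < Z)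
    (μ : Measure ℝ)
    (hμ : μ = (volume.restrict S).withDensity (fun x => ENNReal.ofReal (m x / Z)))
    (ρ ρ' : ℝ → ℝ)
    (hρ_deriv : ∀ x ∈ S, HasDerivAt ρ (ρ' x) x)
    (hρ'_pos : ∀ x ∈ S, 0 < ρ' x)
    (hρ_int : Integrable ρ μ)
    (g g' : ℝ → ℝ)
    (hg'_meas : Measurable g')
    (hg_ii : ∀ x ∈ S, ∀ y ∈ S, IntervalIntegrable g' volume x y)
    (hg_ftc : ∀ x ∈ S, ∀ y ∈ S, g y - g x = ∫ t in x..y, g' t ∂volume)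
    (hg'_le : ∀ᵐ x ∂(volume.restrict S), |g' x| ≤ ρ' x)
    (hg_int : Integrable g μ)
    (hg_mean : ∫ x, g x ∂μ = 0) :
    (∀ x ∈ S, ∫ z in S ∩ Ioi x, g z * m z ∂volume ≤
      ∫ z in S ∩ Ioi x, (ρ z - ∫ w, ρ w ∂μ) * m z ∂volume) ∧
    (⨆ x ∈ S, ENNReal.ofReal ((1 / ρ' x) * ∫ z in S ∩ Ioi x, g z * m z ∂volume)) ≤
      (⨆ x ∈ S, ENNReal.ofReal (|g' x| / ρ' x)) *
      (⨆ x ∈ S, ENNReal.ofReal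
        ((1 / ρ' x) * ∫ z in S ∩ Ioi x, (ρ z - ∫ w, ρ w ∂μ) * m z ∂volume)) := by
  -- basic structure of S
  have hSord : OrdConnected S := by
    rw [hS]
    refine ⟨fun a ha b hb z hz => ⟨?_, ?_⟩⟩
    · exact lt_of_lt_of_le ha.1 (EReal.coe_le_coe_iff.2 hz.1)
    · exact lt_of_le_of_lt (EReal.coe_le_coe_iff.2 hz.2) hb.2
  have hSmeas : MeasurableSet S := hSord.measurableSet
  -- density
  have hd : AEMeasurable (fun x => (m x / Z).toNNReal) (volume.restrict S) :=
    measurable_real_toNNReal.comp_aemeasurable (hm_int.aemeasurable.div_const Z)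
  have hμ' : μ = (volume.restrict S).withDensity (fun x => ((m x / Z).toNNReal : ENNReal)) := hμ
  -- transfer of integrals
  have transfer : ∀ F : ℝ → ℝ, (∫ w, F w ∂μ) = (1 / Z) * ∫ z in S, F z * m z := by
    intro F
    rw [hμ', integral_withDensity_eq_integral_smul₀ hd]
    rw [show (fun z => (m z / Z).toNNReal • F z) = fun z => ((m z / Z).toNNReal : ℝ) * F z from
      rfl]
    rw [setIntegral_congr_fun hSmeas (g := fun z => (1 / Z) * (F z * m z)) (fun z hz => by
      rw [Real.coe_toNNReal _ (div_nonneg (hm_pos z hz).le hZ_pos.le)]; ring)]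
    exact integral_const_mul _ _
  have transferInt : ∀ F : ℝ → ℝ, Integrable F μ →
      IntegrableOn (fun z => F z * m z) S volume := by
    intro F hF
    rw [hμ', integrable_withDensity_iff_integrable_smul₀ hd] at hF
    have h1 : IntegrableOn (fun z => (1 / Z) * (F z * m z)) S volume := by
      refine hF.congr ?_
      filter_upwards [ae_restrict_mem hSmeas] with z hz
      rw [NNReal.smul_def, Real.coe_toNNReal _ (div_nonneg (hm_pos z hz).le hZ_pos.le), smul_eq_mul]; ring
    refine (h1.const_mul Z).congr ?_
    filter_upwards with z
    field_simp
  have hρm_int : IntegrableOn (fun z => ρ z * m z) S volume := transferInt ρ hρ_int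
  have hgm_int : IntegrableOn (fun z => g z * m z) S volume := transferInt g hg_int
  set c : ℝ := ∫ w, ρ w ∂μ with hc_def
  have hρmZ : (∫ z in S, ρ z * m z) = Z * c := by
    have := transfer ρ
    rw [← hc_def] at this
    rw [this, ← mul_assoc, mul_one_div_cancel hZ_pos.ne', one_mul]
  have hgm0 : (∫ z in S, g z * m z) = 0 := by
    have := transfer g
    rw [hg_mean] at this
    have hZ' : (1 : ℝ) / Z ≠ 0 := by positivity
    field_simp at this
    linarith [this]
  -- monotonicity lemma
  have hderiv_eq : ∀ t ∈ S, deriv ρ t = ρ' t := fun t ht => (hρ_deriv t ht).deriv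
  have hρmono : MonotoneOn ρ S := by
    intro a ha b hb hab
    have hIcc : Icc a b ⊆ S := hSord.out ha hb
    have h0 : (∫ t in a..b, (0 : ℝ)) ≤ ρ b - ρ a := by
      apply intervalIntegral.integral_le_sub_of_hasDeriv_right_of_le hab
        (fun t ht => (hρ_deriv t (hIcc ht)).continuousAt.continuousWithinAt)
        (fun t ht => (hρ_deriv t (hIcc (Ioo_subset_Icc_self ht))).hasDerivWithinAt)
        (integrableOn_const measure_Icc_lt_top.ne)
        (fun t ht => (hρ'_pos t (hIcc (Ioo_subset_Icc_self ht))).le)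
    simp only [intervalIntegral.integral_zero] at h0
    linarith
  have mono_lem : ∀ ℓ : ℝ, 0 ≤ ℓ → (∀ᵐ z ∂(volume.restrict S), |g' z| ≤ ℓ * ρ' z) →
      MonotoneOn (fun z => ℓ * ρ z - g z) S := by
    intro ℓ hℓ hb x hx y hy hxy
    simp only
    have hIcc : Icc x y ⊆ S := hSord.out hx hy
    set φ : ℝ → ℝ := fun t => min (|g' t|) (ℓ * deriv ρ t) with hφ
    have hgii := hg_ii x hx y hy
    have hgiabs : IntervalIntegrable (fun t => |g' t|) volume x y := hgii.abs
    have hφii : IntervalIntegrable φ volume x y := by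
      refine hgiabs.mono_fun
        ((hg'_meas.abs.min ((measurable_deriv ρ).const_mul ℓ)).aestronglyMeasurable) ?_
      filter_upwards [ae_restrict_mem measurableSet_uIoc] with t ht
      have htS : t ∈ S := hIcc (Ioc_subset_Icc_self (by rwa [uIoc_of_le hxy] at ht))
      have h1 : 0 ≤ ℓ * deriv ρ t := by
        rw [hderiv_eq t htS]; exact mul_nonneg hℓ (hρ'_pos t htS).le
      simp only [hφ, Real.norm_eq_abs, abs_abs]
      rw [abs_of_nonneg (le_min (abs_nonneg _) h1)]
      exact min_le_left _ _
    have step : g y - g x ≤ ℓ * ρ y - ℓ * ρ x := by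
      rw [hg_ftc x hx y hy]
      calc (∫ t in x..y, g' t) ≤ ∫ t in x..y, |g' t| :=
            intervalIntegral.integral_mono_on hxy hgii hgiabs (fun t _ => le_abs_self _)
        _ = ∫ t in x..y, φ t := by
            apply intervalIntegral.integral_congr_ae
            filter_upwards [(ae_restrict_iff' hSmeas).1 hb] with t ht htΙ
            have htS : t ∈ S := hIcc (Ioc_subset_Icc_self (by rwa [uIoc_of_le hxy] at htΙ))
            simp only [hφ]
            rw [min_eq_left (by rw [hderiv_eq t htS]; exact ht htS)]
        _ ≤ ℓ * ρ y - ℓ * ρ x := by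
            apply intervalIntegral.integral_le_sub_of_hasDeriv_right_of_le hxy
              (g := fun t => ℓ * ρ t) (g' := fun t => ℓ * ρ' t)
              (fun t ht =>
                (continuousAt_const.mul (hρ_deriv t (hIcc ht)).continuousAt).continuousWithinAt)
              (fun t ht =>
                (((hρ_deriv t (hIcc (Ioo_subset_Icc_self ht)))).const_mul ℓ).hasDerivWithinAt)
              ((intervalIntegrable_iff_integrableOn_Icc_of_le hxy).1 hφii)
              (fun t ht => ?_)
            have htS : t ∈ S := hIcc (Ioo_subset_Icc_self ht)
            calc φ t ≤ ℓ * deriv ρ t := min_le_right _ _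
              _ = ℓ * ρ' t := by rw [hderiv_eq t htS]
    linarith
  -- tail positivity
  have pos_tail : ∀ F : ℝ → ℝ, MonotoneOn F S →
      IntegrableOn (fun z => F z * m z) S volume →
      (∫ z in S, F z * m z) = 0 → ∀ x ∈ S, 0 ≤ ∫ z in S ∩ Ioi x, F z * m z := by
    intro F hFmono hFint hFmean x hx
    have hsplit : (∫ z in S ∩ Iic x, F z * m z) + (∫ z in S ∩ Ioi x, F z * m z)
        = ∫ z in S, F z * m z := by
      rw [← setIntegral_union ((Iic_disjoint_Ioi le_rfl).mono inter_subset_right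
          inter_subset_right) (hSmeas.inter measurableSet_Ioi)
          (hFint.mono_set inter_subset_left) (hFint.mono_set inter_subset_left)]
      congr 1
      rw [← inter_union_distrib_left, Iic_union_Ioi, inter_univ]
    rcases le_or_gt 0 (F x) with h | h
    · refine setIntegral_nonneg (hSmeas.inter measurableSet_Ioi) fun z hz => ?_
      exact mul_nonneg (h.trans (hFmono hx hz.1 hz.2.le)) (hm_pos z hz.1).le
    · have h1 : (∫ z in S ∩ Iic x, F z * m z) ≤ 0 := by
        refine setIntegral_nonpos (hSmeas.inter measurableSet_Iic) fun z hz => ?_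
        exact mul_nonpos_iff.2 (Or.inr ⟨(hFmono hz.1 hx hz.2).trans h.le, (hm_pos z hz.1).le⟩)
      linarith [hsplit, hFmean]
  -- integrability of (ρ - c) * m on S
  have hrc_int : IntegrableOn (fun z => (ρ z - c) * m z) S volume := by
    have h := hρm_int.sub (hm_int.const_mul c)
    refine h.congr ?_
    filter_upwards with z
    simp only [Pi.sub_apply]
    ring
  have hrc_mean : (∫ z in S, (ρ z - c) * m z) = 0 := by
    have h : (∫ z in S, (ρ z - c) * m z)
        = (∫ z in S, ρ z * m z) - c * ∫ z in S, m z := by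
      rw [show (fun z => (ρ z - c) * m z) = fun z => ρ z * m z - c * m z from by
        funext z; ring]
      rw [integral_sub hρm_int (hm_int.const_mul c), integral_const_mul]
    rw [h, hρmZ, ← hZ_def]
    ring
  -- the key inequality
  have key : ∀ ℓ : ℝ, 0 ≤ ℓ → (∀ᵐ z ∂(volume.restrict S), |g' z| ≤ ℓ * ρ' z) → ∀ x ∈ S,
      (∫ z in S ∩ Ioi x, g z * m z) ≤ ℓ * ∫ z in S ∩ Ioi x, (ρ z - c) * m z := by
    intro ℓ hℓ hb x hx
    have hFmono : MonotoneOn (fun z => ℓ * (ρ z - c) - g z) S := by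
      have h := mono_lem ℓ hℓ hb
      intro a ha b hb' hab
      have := h ha hb' hab
      simp only at this ⊢
      linarith
    have hFint : IntegrableOn (fun z => (ℓ * (ρ z - c) - g z) * m z) S volume := by
      have h := (hrc_int.const_mul ℓ).sub hgm_int
      refine h.congr ?_
      filter_upwards with z
      simp only [Pi.sub_apply]
      ring
    have hFmean : (∫ z in S, (ℓ * (ρ z - c) - g z) * m z) = 0 := by
      have h : (∫ z in S, (ℓ * (ρ z - c) - g z) * m z)
          = ℓ * (∫ z in S, (ρ z - c) * m z) - ∫ z in S, g z * m z := by
        rw [show (fun z => (ℓ * (ρ z - c) - g z) * m z)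
            = fun z => ℓ * ((ρ z - c) * m z) - g z * m z from by funext z; ring]
        rw [integral_sub (hrc_int.const_mul ℓ) hgm_int, integral_const_mul]
      rw [h, hrc_mean, hgm0]
      ring
    have h0 := pos_tail _ hFmono hFint hFmean x hx
    have e2 : (∫ z in S ∩ Ioi x, (ℓ * (ρ z - c) - g z) * m z)
        = ℓ * (∫ z in S ∩ Ioi x, (ρ z - c) * m z) - ∫ z in S ∩ Ioi x, g z * m z := by
      rw [show (fun z => (ℓ * (ρ z - c) - g z) * m z)
          = fun z => ℓ * ((ρ z - c) * m z) - g z * m z from by funext z; ring]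
      rw [integral_sub ((hrc_int.mono_set inter_subset_left).const_mul ℓ)
        (hgm_int.mono_set inter_subset_left), integral_const_mul]
    linarith
  have first : ∀ x ∈ S, (∫ z in S ∩ Ioi x, g z * m z)
      ≤ ∫ z in S ∩ Ioi x, (ρ z - c) * m z := by
    intro x hx
    have h := key 1 one_pos.le (by filter_upwards [hg'_le] with z hz; linarith) x hx
    linarith
  have tail_nonneg : ∀ x ∈ S, 0 ≤ ∫ z in S ∩ Ioi x, (ρ z - c) * m z := by
    intro x hx
    exact pos_tail _ (fun a ha b hb hab => by
      simpa using sub_le_sub_right (hρmono ha hb hab) c) hrc_int hrc_mean x hx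
  refine ⟨first, ?_⟩
  set L := ⨆ x ∈ S, ENNReal.ofReal (|g' x| / ρ' x) with hL
  set C := ⨆ x ∈ S, ENNReal.ofReal
    ((1 / ρ' x) * ∫ z in S ∩ Ioi x, (ρ z - c) * m z) with hCdef
  refine iSup₂_le fun x hx => ?_
  by_cases hLtop : L = ⊤
  · by_cases hC0 : C = 0
    · -- tail integral of ρ - c vanishes at x
      have h1 : ENNReal.ofReal ((1 / ρ' x) * ∫ z in S ∩ Ioi x, (ρ z - c) * m z) ≤ C :=
        le_iSup₂ (f := fun y (_ : y ∈ S) => ENNReal.ofReal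
          ((1 / ρ' y) * ∫ z in S ∩ Ioi y, (ρ z - c) * m z)) x hx
      rw [hC0, le_zero_iff, ENNReal.ofReal_eq_zero] at h1
      have hρ'x := hρ'_pos x hx
      have hTnn := tail_nonneg x hx
      have hT0 : (∫ z in S ∩ Ioi x, (ρ z - c) * m z) = 0 := by
        by_contra hne
        have hTpos : 0 < ∫ z in S ∩ Ioi x, (ρ z - c) * m z :=
          lt_of_le_of_ne hTnn (Ne.symm hne)
        have hp : 0 < (1 / ρ' x) * ∫ z in S ∩ Ioi x, (ρ z - c) * m z :=
          mul_pos (by positivity) hTpos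
        linarith
      have hg_le : (∫ z in S ∩ Ioi x, g z * m z) ≤ 0 := by
        have := first x hx; linarith [hT0]
      have : ENNReal.ofReal ((1 / ρ' x) * ∫ z in S ∩ Ioi x, g z * m z) = 0 := by
        rw [ENNReal.ofReal_eq_zero]
        have h2 : (0:ℝ) ≤ 1 / ρ' x := by positivity
        exact mul_nonpos_iff.2 (Or.inl ⟨h2, hg_le⟩)
      rw [this]
      exact bot_le
    · rw [hLtop, ENNReal.top_mul hC0]
      exact le_top
  · set ℓ : ℝ := L.toReal with hℓdef
    have hℓnn : 0 ≤ ℓ := ENNReal.toReal_nonneg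
    have hbound : ∀ᵐ z ∂(volume.restrict S), |g' z| ≤ ℓ * ρ' z := by
      filter_upwards [ae_restrict_mem hSmeas] with z hz
      have h1 : ENNReal.ofReal (|g' z| / ρ' z) ≤ L :=
        le_iSup₂ (f := fun y (_ : y ∈ S) => ENNReal.ofReal (|g' y| / ρ' y)) z hz
      rw [← ENNReal.ofReal_toReal hLtop] at h1
      have h2 : |g' z| / ρ' z ≤ ℓ := (ENNReal.ofReal_le_ofReal_iff hℓnn).1 h1
      have hρ'z := hρ'_pos z hz
      calc |g' z| = (|g' z| / ρ' z) * ρ' z := by field_simp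
        _ ≤ ℓ * ρ' z := mul_le_mul_of_nonneg_right h2 hρ'z.le
    have hkey := key ℓ hℓnn hbound x hx
    have hρ'x := hρ'_pos x hx
    have h3 : (1 / ρ' x) * (∫ z in S ∩ Ioi x, g z * m z)
        ≤ ℓ * ((1 / ρ' x) * ∫ z in S ∩ Ioi x, (ρ z - c) * m z) := by
      have h4 := mul_le_mul_of_nonneg_left hkey (by positivity : (0:ℝ) ≤ 1 / ρ' x)
      linarith [h4]
    calc ENNReal.ofReal ((1 / ρ' x) * ∫ z in S ∩ Ioi x, g z * m z)
        ≤ ENNReal.ofReal (ℓ * ((1 / ρ' x) * ∫ z in S ∩ Ioi x, (ρ z - c) * m z)) :=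
          ENNReal.ofReal_le_ofReal h3
      _ = ENNReal.ofReal ℓ * ENNReal.ofReal
            ((1 / ρ' x) * ∫ z in S ∩ Ioi x, (ρ z - c) * m z) :=
          ENNReal.ofReal_mul hℓnn
      _ ≤ L * C := by
          refine mul_le_mul' (by rw [hℓdef, ENNReal.ofReal_toReal hLtop]) ?_
          exact le_iSup₂ (f := fun y (_ : y ∈ S) => ENNReal.ofReal
            ((1 / ρ' y) * ∫ z in S ∩ Ioi y, (ρ z - c) * m z)) x hx
end
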